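/- The matroid P₉ is isomorphic to the generalized parallel connection P_Δ(F₇, M(W₃)) of the Fano matroid and the rank-3 wheel across a common triangle, with the rim element of the triangle deleted. -/

import Mathlib

open Matroid Set

/-- The rank of a set in a matroid: the largest cardinality of an independent subset. -/
noncomputable def Matroid.rfun {α : Type*} (M : Matroid α) (X : Set α) : ℕ :=
  sSup {n | ∃ I, M.Indep I ∧ I ⊆ X ∧ I.ncard = n}

/-- The connectivity function λ(X) = r(X) + r(E \ X) - r(M). -/
noncomputable def Matroid.lam {α : Type*} (M : Matroid α) (X : Set α) : ℕ :=
  M.rfun X + M.rfun (M.E \ X) - M.rfun M.E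

/-- A circuit: a minimal dependent set. -/
def Matroid.Cct {α : Type*} (M : Matroid α) (C : Set α) : Prop :=
  C ⊆ M.E ∧ ¬ M.Indep C ∧ ∀ D, D ⊂ C → M.Indep D

/-- Deletion of a set of elements. -/
def Matroid.del {α : Type*} (M : Matroid α) (D : Set α) : Matroid α := M.restrict (M.E \ D)

/-- Contraction of a set of elements. -/
def Matroid.con {α : Type*} (M : Matroid α) (C : Set α) : Matroid α := (M✶.del C)✶

/-- Isomorphism of matroids. -/
def MatroidIso {α β : Type*} (M : Matroid α) (N : Matroid β) : Prop :=
  ∃ e : M.E ≃ N.E, ∀ I : Set M.E, M.Indep ((↑) '' I) ↔ N.Indep ((↑) '' (⇑e '' I))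

/-- `M` has a minor isomorphic to `N`. -/
def HasMinorIso {α β : Type*} (M : Matroid α) (N : Matroid β) : Prop :=
  ∃ C D : Set α, MatroidIso ((M.con C).del D) N

/-- `M` is the binary matroid represented by the columns of the matrix `A`. -/
def IsBinaryRep {n m : ℕ} (A : Matrix (Fin n) (Fin m) (ZMod 2)) (M : Matroid (Fin m)) : Prop :=
  M.E = Set.univ ∧
    ∀ I : Set (Fin m), M.Indep I ↔ LinearIndependent (ZMod 2) (fun i : I => A.transpose i.1)

/-- A matroid is binary if it is representable over GF(2). -/
def IsBinary {α : Type*} (M : Matroid α) : Prop :=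
  ∃ (n : ℕ) (v : α → (Fin n → ZMod 2)), ∀ I : Set α, I ⊆ M.E →
    (M.Indep I ↔ LinearIndependent (ZMod 2) (fun x : I => v x.1))

/-- An exact k-separation. -/
noncomputable def ExactSep {α : Type*} (M : Matroid α) (k : ℕ) (A B : Set α) : Prop :=
  A ∪ B = M.E ∧ Disjoint A B ∧ k ≤ A.ncard ∧ k ≤ B.ncard ∧ M.lam A = k - 1

/-- A matroid is 3-connected if it has no k-separation for k ≤ 2. -/
noncomputable def ThreeConnected {α : Type*} (M : Matroid α) : Prop :=
  ∀ k : ℕ, ∀ A : Set α, 1 ≤ k → k ≤ 2 → A ⊆ M.E → k ≤ A.ncard → k ≤ (M.E \ A).ncard →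
    k ≤ M.lam A

/-- `M` is the cycle matroid of the graph `G`. -/
def IsCycleMatroid {V : Type*} (G : SimpleGraph V) (M : Matroid (Sym2 V)) : Prop :=
  M.E = G.edgeSet ∧ ∀ I : Set (Sym2 V),
    M.Indep I ↔ I ⊆ G.edgeSet ∧ (SimpleGraph.fromEdgeSet I).IsAcyclic

/-- The prism graph: two triangles joined by a perfect matching. -/
def prismGraph : SimpleGraph (Fin 6) :=
  SimpleGraph.fromEdgeSet
    {s(0,1), s(1,2), s(0,2), s(3,4), s(4,5), s(3,5), s(0,3), s(1,4), s(2,5)}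

/-- The graph K₅ minus an edge. -/
def K5e : SimpleGraph (Fin 5) := (SimpleGraph.completeGraph (Fin 5)).deleteEdges {s(0,1)}

/-- H is a minor of G: branch-set definition. -/
def GraphMinor {W V : Type*} (H : SimpleGraph W) (G : SimpleGraph V) : Prop :=
  ∃ f : W → Set V, (∀ w, (f w).Nonempty) ∧ (∀ w, (G.induce (f w)).Connected) ∧
    (Pairwise fun w w' => Disjoint (f w) (f w')) ∧
    ∀ w w', H.Adj w w' → ∃ a ∈ f w, ∃ b ∈ f w', G.Adj a b

/-- A graph is 3-connected. -/
def GraphThreeConnected {V : Type*} (G : SimpleGraph V) : Prop :=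
  4 ≤ Nat.card V ∧ ∀ S : Set V, S.ncard < 3 → (G.induce Sᶜ).Connected

def P9mat : Matrix (Fin 4) (Fin 9) (ZMod 2) :=
  !![1,0,0,0,0,1,1,1,1; 0,1,0,0,1,0,1,1,1; 0,0,1,0,1,1,0,1,0; 0,0,0,1,1,1,1,1,0]

def prismMat : Matrix (Fin 5) (Fin 9) (ZMod 2) :=
  !![1,0,0,0,0,1,0,1,0; 0,1,0,0,0,1,0,0,1; 0,0,1,0,0,0,0,1,1;
     0,0,0,1,0,0,1,1,0; 0,0,0,0,1,0,1,0,1]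

def F7mat : Matrix (Fin 3) (Fin 7) (ZMod 2) :=
  !![1,0,0,1,1,0,1; 0,1,0,1,0,1,1; 0,0,1,0,1,1,1]

/-- The matroid `Z_r`: identity columns, then `b₁,…,b_r` (zeros on the diagonal,
ones elsewhere), then the all-ones column `c_r`. -/
def Zrmat (r : ℕ) : Matrix (Fin r) (Fin (2*r+1)) (ZMod 2) := fun i j =>
  if (j : ℕ) < r then (if (i : ℕ) = (j : ℕ) then 1 else 0)
  else if (j : ℕ) < 2*r then (if (i : ℕ) + r = (j : ℕ) then 0 else 1)
  else 1

def Z4mat : Matrix (Fin 4) (Fin 9) (ZMod 2) :=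
  !![1,0,0,0,0,1,1,1,1; 0,1,0,0,1,0,1,1,1; 0,0,1,0,1,1,0,1,1; 0,0,0,1,1,1,1,0,1]

def AG32mat : Matrix (Fin 4) (Fin 8) (ZMod 2) :=
  !![1,1,1,1,1,1,1,1; 0,0,0,0,1,1,1,1; 0,0,1,1,0,0,1,1; 0,1,0,1,0,1,0,1]

def S8mat : Matrix (Fin 4) (Fin 8) (ZMod 2) :=
  !![1,0,0,0,1,0,1,1; 0,1,0,0,1,1,0,1; 0,0,1,0,1,1,1,0; 0,0,0,1,1,1,1,1]

def E5mat : Matrix (Fin 5) (Fin 10) (ZMod 2) :=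
  !![1,0,0,0,0,0,1,1,1,1; 0,1,0,0,0,1,0,1,1,1; 0,0,1,0,0,1,1,0,1,1;
     0,0,0,1,0,1,1,1,1,0; 0,0,0,0,1,1,1,0,0,0]

def R10mat : Matrix (Fin 5) (Fin 10) (ZMod 2) :=
  !![1,0,0,0,0,1,0,0,1,1; 0,1,0,0,0,1,1,0,0,1; 0,0,1,0,0,1,1,1,0,0;
     0,0,0,1,0,0,1,1,1,0; 0,0,0,0,1,0,0,1,1,1]

def D1mat : Matrix (Fin 4) (Fin 10) (ZMod 2) :=
  !![1,0,0,0,0,1,1,1,1,1; 0,1,0,0,1,0,1,1,1,1; 0,0,1,0,1,1,0,1,0,1; 0,0,0,1,1,1,1,1,0,0]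

def D2mat : Matrix (Fin 4) (Fin 10) (ZMod 2) :=
  !![1,0,0,0,0,1,1,1,1,1; 0,1,0,0,1,0,1,1,1,0; 0,0,1,0,1,1,0,1,0,0; 0,0,0,1,1,1,1,1,0,1]

/-- Representation of the generalized parallel connection of F₇ and M(W₃) across the
triangle consisting of columns 0, 1, 2 (the triangle is {e₁, e₂, e₁+e₂}); column 2
(= e₁+e₂) is the rim element of the triangle. -/
def PFW3mat : Matrix (Fin 4) (Fin 10) (ZMod 2) :=
  !![1,0,1,0,1,0,1,0,1,0; 0,1,1,0,0,1,1,0,0,1; 0,0,0,1,1,1,1,0,0,0; 0,0,0,0,0,0,0,1,1,1]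

/-- Representation of the generalized parallel connection of F₇ and F₇ across the
triangle consisting of columns 0, 1, 2. -/
def PFFmat : Matrix (Fin 4) (Fin 11) (ZMod 2) :=
  !![1,0,1,0,1,0,1,0,1,0,1; 0,1,1,0,0,1,1,0,0,1,1; 0,0,0,1,1,1,1,0,0,0,0;
     0,0,0,0,0,0,0,1,1,1,1]

def Amat : Matrix (Fin 5) (Fin 11) (ZMod 2) :=
  !![1,0,0,0,0,0,1,1,1,1,0; 0,1,0,0,0,1,0,1,1,0,0; 0,0,1,0,0,1,1,0,1,1,1;
     0,0,0,1,0,1,1,1,1,0,0; 0,0,0,0,1,1,1,0,0,0,1]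

def Bmat : Matrix (Fin 5) (Fin 11) (ZMod 2) :=
  !![1,0,0,0,0,0,1,1,1,1,1; 0,1,0,0,0,1,0,1,1,0,0; 0,0,1,0,0,1,1,0,1,1,0;
     0,0,0,1,0,1,1,1,1,0,1; 0,0,0,0,1,1,1,0,0,0,1]

def Cmat : Matrix (Fin 5) (Fin 11) (ZMod 2) :=
  !![1,0,0,0,0,0,1,1,1,1,1; 0,1,0,0,0,1,0,1,1,0,1; 0,0,1,0,0,1,1,0,1,1,0;
     0,0,0,1,0,1,1,1,1,0,0; 0,0,0,0,1,1,1,0,0,0,1]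

/-- The matroid Z: R₁₀ extended by the column (0,1,0,1,1)ᵀ. -/
def Zextmat : Matrix (Fin 5) (Fin 11) (ZMod 2) :=
  !![1,0,0,0,0,1,0,0,1,1,0; 0,1,0,0,0,1,1,0,0,1,1; 0,0,1,0,0,1,1,1,0,0,0;
     0,0,0,1,0,0,1,1,1,0,1; 0,0,0,0,1,0,0,1,1,1,1]

def wheel4Graph : SimpleGraph (Fin 5) :=
  SimpleGraph.fromEdgeSet {s(0,1), s(1,2), s(2,3), s(0,3), s(0,4), s(1,4), s(2,4), s(3,4)}

def Tm : Matrix (Fin 4) (Fin 4) (ZMod 2) := !![0,1,0,1;0,0,1,0;1,1,0,0;0,0,1,1]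
def Tinv : Matrix (Fin 4) (Fin 4) (ZMod 2) := !![1,1,1,1;1,1,0,1;0,1,0,0;0,1,0,1]
def Ff : Fin 9 → Fin 10 := ![3,4,9,8,5,6,7,1,0]
def Fg : Fin 10 → Fin 9 := ![8,7,0,0,1,4,5,6,3,2]

lemma hTinv : Tinv * Tm = 1 := by decide
lemma hFinj : Function.Injective Ff := by decide
lemma hF2 : ∀ j, Ff j ≠ 2 := by decide
lemma hFg : ∀ j, Fg (Ff j) = j := by decide
lemma hGf : ∀ y : Fin 10, y ≠ 2 → Ff (Fg y) = y := by decide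
lemma hcol : ∀ j, Tm.mulVec (P9mat.transpose j) = PFW3mat.transpose (Ff j) := by decide

lemma Tker : LinearMap.ker Tm.mulVecLin = ⊥ := by
  rw [LinearMap.ker_eq_bot]
  intro x y h
  have := congrArg Tinv.mulVec h
  simpa [Matrix.mulVec_mulVec, hTinv] using this

lemma key (J : Set (Fin 9)) :
    LinearIndependent (ZMod 2) (fun i : J => P9mat.transpose i.1) ↔
    LinearIndependent (ZMod 2) (fun j : (Ff '' J) => PFW3mat.transpose j.1) := by
  rw [← linearIndependent_equiv (Equiv.Set.image Ff J hFinj)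
      (f := fun j : (Ff '' J) => PFW3mat.transpose j.1)]
  have : (fun j : (Ff '' J) => PFW3mat.transpose j.1) ∘ (Equiv.Set.image Ff J hFinj)
      = Tm.mulVecLin ∘ (fun i : J => P9mat.transpose i.1) := by
    funext i
    simp [Equiv.Set.image, Equiv.Set.imageOfInjOn, ← hcol, Matrix.mulVecLin]
  rw [this, LinearMap.linearIndependent_iff _ Tker]

/-- P₉ is isomorphic to the generalized parallel connection P_Δ(F₇, M(W₃)) with the rim
element of the triangle (column 2) deleted. -/
theorem stmt_17 (P : Matroid (Fin 9)) (hP : IsBinaryRep P9mat P)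
    (G : Matroid (Fin 10)) (hG : IsBinaryRep PFW3mat G) :
    MatroidIso P (G.del {2}) := by
  classical
  obtain ⟨hPE, hPI⟩ := hP
  obtain ⟨hGE, hGI⟩ := hG
  have hdelE : (G.del {2}).E = (Set.univ : Set (Fin 10)) \ {2} := by
    simp [Matroid.del, hGE]
  refine ⟨?_, ?_⟩
  · exact {
      toFun := fun x => ⟨Ff x.1, by rw [hdelE]; exact ⟨trivial, hF2 x.1⟩⟩
      invFun := fun y => ⟨Fg y.1, by rw [hPE]; trivial⟩
      left_inv := fun x => Subtype.ext (hFg x.1)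
      right_inv := fun y => Subtype.ext (hGf y.1
        ((Set.ext_iff.mp hdelE y.1 |>.mp y.2).2)) }
  · intro I
    have himg : ((↑) '' ((fun x : P.E => (⟨Ff x.1, by rw [hdelE]; exact ⟨trivial, hF2 x.1⟩⟩ :
        (G.del {2}).E)) '' I) : Set (Fin 10)) = Ff '' ((↑) '' I) := by
      rw [Set.image_image, Set.image_image]
    have hindep : ∀ K : Set (Fin 10), (G.del {2}).Indep K ↔ (G.Indep K ∧ K ⊆ G.E \ {2}) :=
      fun K => Matroid.restrict_indep_iff
    rw [hPI, key, hindep]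
    simp only [Equiv.coe_fn_mk]
    rw [himg, hGI]
    constructor
    · intro h
      refine ⟨h, ?_⟩
      rintro x ⟨y, -, rfl⟩
      rw [hGE]; exact ⟨trivial, hF2 y⟩
    · exact fun h => h.1
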